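/- Fix 1 ≤ k ≤ n−1 and 1 ≤ d. Suppose Σ_{i=1}^{d−1} 3^i · C(n,i) < (2^{2n} − 1)/(2^{n+k} − 1). Then there exists a self-orthogonal additive code C over F_4 of length n and F_2-dimension n−k such that every vector in C^⊥ \ C has Hamming weight at least d. -/

import Mathlib

open Module
open scoped Classical

abbrev F4 := GaloisField 2 2

/-- The trace inner product on F_4^n (its values lie in the subfield F_2). -/
noncomputable def trF {n : ℕ} (u v : Fin n → F4) : F4 :=
  ∑ i, (u i * v i ^ 2 + u i ^ 2 * v i)

/-- An additive code (F_2-subspace of F_4^n) is self-orthogonal if it is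
contained in its trace-dual. -/
def SelfOrth {n : ℕ} (C : Submodule (ZMod 2) (Fin n → F4)) : Prop :=
  ∀ u ∈ C, ∀ v ∈ C, trF u v = 0

/-- Hamming weight of a vector in F_4^n. -/
noncomputable def wt {n : ℕ} (u : Fin n → F4) : ℕ := Nat.card {i : Fin n // u i ≠ 0}

section Aux

variable {n : ℕ}

lemma F4two : (2:F4) = 0 := by
  have := CharP.cast_eq_zero F4 2; exact_mod_cast this
noncomputable instance : Fintype F4 := Fintype.ofFinite _
lemma F4card : Fintype.card F4 = 4 := by
  have := GaloisField.card 2 2 (by norm_num)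
  simpa [Nat.card_eq_fintype_card] using this
lemma F4pow4 (x : F4) : x ^ 4 = x := by
  have := FiniteField.pow_card x
  rwa [F4card] at this

lemma F4idem (x : F4) (h : x ^ 2 = x) : x = 0 ∨ x = 1 := by
  have : x * (x - 1) = 0 := by ring_nf; rw [sq] at h; linear_combination h
  rcases mul_eq_zero.mp this with h | h
  · exact Or.inl h
  · exact Or.inr (by linear_combination h)

lemma exists_tr_one : ∃ t : F4, t + t ^ 2 = 1 := by
  classical
  have : ∃ x : F4, x ≠ 0 ∧ x ≠ 1 := by
    by_contra h
    push_neg at h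
    have hsub : (Finset.univ : Finset F4) ⊆ {0, 1} := by
      intro x _
      rcases em (x = 0) with h1 | h1
      · simp [h1]
      · simp [h x h1]
    have h5 := Finset.card_le_card hsub
    rw [Finset.card_univ, F4card] at h5
    have h6 : ({0, 1} : Finset F4).card ≤ 2 :=
      (Finset.card_insert_le _ _).trans (by simp)
    omega
  obtain ⟨x, hx0, hx1⟩ := this
  refine ⟨x, ?_⟩
  have hfix : (x + x ^ 2) ^ 2 = x + x ^ 2 := by
    linear_combination F4pow4 x + x ^ 3 * F4two
  rcases F4idem _ hfix with h | h
  · exfalso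
    have hx2 : x ^ 2 = x := by linear_combination h - x * F4two
    rcases F4idem x hx2 with h' | h'
    · exact hx0 h'
    · exact hx1 h'
  · exact h

lemma zmod2_cases (c : ZMod 2) : c = 0 ∨ c = 1 := by fin_cases c <;> simp; exacts [Or.inl rfl, Or.inr rfl]

lemma trF_add_left (u u' v : Fin n → F4) : trF (u + u') v = trF u v + trF u' v := by
  unfold trF
  rw [← Finset.sum_add_distrib]
  refine Finset.sum_congr rfl fun i _ => ?_
  simp only [Pi.add_apply]
  linear_combination u i * u' i * v i * F4two

lemma trF_comm (u v : Fin n → F4) : trF u v = trF v u := by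
  unfold trF; refine Finset.sum_congr rfl fun i _ => by ring

lemma trF_add_right (u v v' : Fin n → F4) : trF u (v + v') = trF u v + trF u v' := by
  rw [trF_comm, trF_add_left, trF_comm v u, trF_comm v' u]

lemma trF_smul_left (c : ZMod 2) (u v : Fin n → F4) : trF (c • u) v = c • trF u v := by
  rcases zmod2_cases c with h | h <;> simp [h, trF]

lemma trF_smul_right (c : ZMod 2) (u v : Fin n → F4) : trF u (c • v) = c • trF u v := by
  rw [trF_comm, trF_smul_left, trF_comm]

lemma trF_self (u : Fin n → F4) : trF u u = 0 := by
  unfold trF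
  refine Finset.sum_eq_zero fun i _ => ?_
  linear_combination (u i)^3 * F4two

lemma trF_zero_left (v : Fin n → F4) : trF 0 v = 0 := by simp [trF]
lemma trF_zero_right (v : Fin n → F4) : trF v 0 = 0 := by simp [trF]

lemma trF_sq (u v : Fin n → F4) : trF u v ^ 2 = trF u v := by
  unfold trF
  have hf : ∀ x : F4, x ^ 2 = frobenius F4 2 x := fun x => rfl
  rw [hf, map_sum]
  refine Finset.sum_congr rfl fun i _ => ?_
  rw [← hf]
  linear_combination (u i)^2 * F4pow4 (v i) + (v i)^2 * F4pow4 (u i) + (u i)^3*(v i)^3 * F4two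


lemma trF_cases (u v : Fin n → F4) : trF u v = 0 ∨ trF u v = 1 :=
  F4idem _ (trF_sq u v)

/-- corestriction of trF to ZMod 2 -/
noncomputable def bf {n : ℕ} (u v : Fin n → F4) : ZMod 2 :=
  if trF u v = 0 then 0 else 1

lemma bf_eq_zero_iff (u v : Fin n → F4) : bf u v = 0 ↔ trF u v = 0 := by
  unfold bf; split <;> simp_all

lemma bf_smul_trF (u v : Fin n → F4) : (bf u v) • (1:F4) = trF u v := by
  unfold bf
  rcases trF_cases u v with h | h <;> simp [h]

lemma bf_add_left (u u' v : Fin n → F4) : bf (u + u') v = bf u v + bf u' v := by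
  have key : ((bf (u+u') v) • (1:F4)) = ((bf u v + bf u' v) • (1:F4)) := by
    rw [add_smul, bf_smul_trF, bf_smul_trF, bf_smul_trF, trF_add_left]
  -- deduce equality in ZMod 2 from equality of smul on 1
  have inj : Function.Injective (fun c : ZMod 2 => c • (1:F4)) := by
    intro a b hab
    rcases zmod2_cases a with ha | ha <;> rcases zmod2_cases b with hb | hb <;>
      simp_all
  exact inj key

lemma bf_smul_left (c : ZMod 2) (u v : Fin n → F4) : bf (c • u) v = c * bf u v := by
  rcases zmod2_cases c with h | h <;>
    simp [h, bf, trF_zero_left]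

lemma bf_comm (u v : Fin n → F4) : bf u v = bf v u := by unfold bf; rw [trF_comm]

lemma bf_add_right (u v v' : Fin n → F4) : bf u (v + v') = bf u v + bf u v' := by
  rw [bf_comm, bf_add_left, bf_comm v u, bf_comm v' u]

lemma bf_smul_right (c : ZMod 2) (u v : Fin n → F4) : bf u (c • v) = c * bf u v := by
  rw [bf_comm, bf_smul_left, bf_comm]

/-- nondegeneracy -/
lemma trF_nondeg (u : Fin n → F4) (h : ∀ v, trF u v = 0) : u = 0 := by
  classical
  funext i
  show u i = 0
  by_contra hi
  obtain ⟨t, ht⟩ := exists_tr_one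
  have := h (Pi.single i (t * u i))
  rw [trF] at this
  rw [Finset.sum_eq_single i] at this
  · rw [Pi.single_eq_same] at this
    apply hi
    have h3 : u i ^ 3 = 0 := by linear_combination this - (u i)^3 * ht
    exact pow_eq_zero_iff (three_ne_zero) |>.mp h3
  · intro b _ hb
    simp [Pi.single_eq_of_ne hb]
  · simp


noncomputable instance : Fintype (Fin n → F4) := by infer_instance

lemma cardV : Fintype.card (Fin n → F4) = 2 ^ (2 * n) := by
  rw [Fintype.card_pi]
  simp [F4card]
  rw [pow_mul]
  norm_num

lemma finrankV : finrank (ZMod 2) (Fin n → F4) = 2 * n := by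
  have h1 : finrank (ZMod 2) F4 = 2 := GaloisField.finrank 2 (by norm_num)
  rw [finrank_pi_fintype]
  simp [h1, Finset.sum_const, mul_comm]

/-- the trace-dual of a submodule -/
noncomputable def perp (C : Submodule (ZMod 2) (Fin n → F4)) :
    Submodule (ZMod 2) (Fin n → F4) where
  carrier := {u | ∀ w ∈ C, trF u w = 0}
  add_mem' := by
    intro a b ha hb w hw
    rw [trF_add_left, ha w hw, hb w hw, add_zero]
  zero_mem' := fun w _ => trF_zero_left w
  smul_mem' := by
    intro c x hx w hw
    have : bf (c • x) w = 0 := by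
      rw [bf_smul_left, (bf_eq_zero_iff x w).2 (hx w hw), mul_zero]
    exact (bf_eq_zero_iff _ _).1 this

lemma mem_perp {C : Submodule (ZMod 2) (Fin n → F4)} (u : Fin n → F4) :
    u ∈ perp C ↔ ∀ w ∈ C, trF u w = 0 := Iff.rfl

/-- sigma : V → Dual V -/
noncomputable def sig : (Fin n → F4) →ₗ[ZMod 2] Module.Dual (ZMod 2) (Fin n → F4) where
  toFun u := {
    toFun := fun v => bf u v
    map_add' := fun v v' => bf_add_right u v v'
    map_smul' := fun c v => bf_smul_right c u v }
  map_add' u u' := LinearMap.ext fun v => bf_add_left u u' v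
  map_smul' c u := LinearMap.ext fun v => bf_smul_left c u v

lemma sig_inj : Function.Injective (sig (n := n)) := by
  rw [← LinearMap.ker_eq_bot]
  ext u
  simp only [LinearMap.mem_ker, Submodule.mem_bot]
  constructor
  · intro h
    apply trF_nondeg
    intro v
    have h2 := LinearMap.congr_fun h v
    simp only [sig, LinearMap.coe_mk, AddHom.coe_mk, LinearMap.zero_apply] at h2
    exact (bf_eq_zero_iff u v).1 h2
  · intro h; subst h
    ext v
    simp [sig, bf, trF_zero_left]

lemma finrank_perp (C : Submodule (ZMod 2) (Fin n → F4)) :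
    finrank (ZMod 2) (perp C) + finrank (ZMod 2) C = 2 * n := by
  have hfd : FiniteDimensional (ZMod 2) (Fin n → F4) := by infer_instance
  have hmap : finrank (ZMod 2) (C.map sig) = finrank (ZMod 2) C :=
    ((Submodule.equivMapOfInjective _ sig_inj C).finrank_eq).symm
  have key := Subspace.finrank_add_finrank_dualCoannihilator_eq (C.map (sig (n := n)))
  have hco : (C.map (sig (n := n))).dualCoannihilator = perp C := by
    ext u
    rw [Submodule.mem_dualCoannihilator, mem_perp]
    constructor
    · intro h w hw
      have := h (sig w) (Submodule.mem_map_of_mem hw)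
      rw [← bf_eq_zero_iff, bf_comm]
      exact this
    · intro h φ hφ
      obtain ⟨w, hw, rfl⟩ := hφ
      show bf w u = 0
      rw [bf_comm, bf_eq_zero_iff]
      exact h w hw
  rw [hco, hmap] at key
  rw [← finrankV (n := n)]
  omega


lemma bf_one_iff (u v : Fin n → F4) : bf u v = 1 ↔ trF u v ≠ 0 := by
  unfold bf; split <;> simp_all

lemma addV_self (x : Fin n → F4) : x + x = 0 := by
  funext i
  show x i + x i = 0
  linear_combination x i * F4two

lemma smul_addV (c : ZMod 2) (a : Fin n → F4) : c • a + c • a = 0 := by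
  rw [← add_smul]
  have : c + c = 0 := by rcases zmod2_cases c with h | h <;> simp [h]; decide
  rw [this, zero_smul]

/-- symplectic transvection -/
noncomputable def Tmap (a : Fin n → F4) : (Fin n → F4) →ₗ[ZMod 2] (Fin n → F4) where
  toFun x := x + bf x a • a
  map_add' x y := by
    show (x + y) + bf (x + y) a • a = (x + bf x a • a) + (y + bf y a • a)
    rw [bf_add_left, add_smul]; abel
  map_smul' c x := by
    show c • x + bf (c • x) a • a = c • (x + bf x a • a)
    rw [bf_smul_left, smul_add, mul_smul]

lemma Tmap_invol (a : Fin n → F4) : Function.Involutive (Tmap a) := by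
  intro x
  show (x + bf x a • a) + bf (x + bf x a • a) a • a = x
  have hb : bf (x + bf x a • a) a = bf x a := by
    rw [bf_add_left, bf_smul_left, (bf_eq_zero_iff a a).2 (trF_self a), mul_zero, add_zero]
  rw [hb, add_assoc, smul_addV, add_zero]

noncomputable def T (a : Fin n → F4) : (Fin n → F4) ≃ₗ[ZMod 2] (Fin n → F4) :=
  LinearEquiv.ofInvolutive (Tmap a) (Tmap_invol a)

lemma T_apply (a x : Fin n → F4) : T a x = x + bf x a • a := rfl

lemma T_apply_of_ne {a x : Fin n → F4} (h : trF x a ≠ 0) : T a x = x + a := by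
  rw [T_apply, (bf_one_iff x a).2 h, one_smul]

lemma T_isometry (a : Fin n → F4) (x y : Fin n → F4) : trF (T a x) (T a y) = trF x y := by
  rw [T_apply, T_apply, trF_add_left, trF_add_right, trF_add_right,
    trF_smul_left, trF_smul_right, trF_smul_right, trF_smul_left, trF_self, smul_zero, smul_zero]
  have key : bf y a • trF x a + bf x a • trF a y = 0 := by
    rw [trF_comm a y]
    rcases trF_cases x a with h1 | h1
    · rw [h1, smul_zero, (bf_eq_zero_iff x a).2 h1, zero_smul, add_zero]
    · rcases trF_cases y a with h2 | h2
      · rw [h2, smul_zero, (bf_eq_zero_iff y a).2 h2, zero_smul, add_zero]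
      · rw [(bf_one_iff x a).2 (by rw [h1]; exact one_ne_zero),
          (bf_one_iff y a).2 (by rw [h2]; exact one_ne_zero), one_smul, one_smul, h1, h2]
        linear_combination F4two
  rw [add_zero, add_assoc, key, add_zero]


lemma exists_coupling {u v : Fin n → F4} (hu : u ≠ 0) (hv : v ≠ 0) :
    ∃ w, trF u w ≠ 0 ∧ trF v w ≠ 0 := by
  have hA : ∃ a, trF u a ≠ 0 := by
    by_contra h; push_neg at h; exact hu (trF_nondeg u h)
  have hB : ∃ b, trF v b ≠ 0 := by
    by_contra h; push_neg at h; exact hv (trF_nondeg v h)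
  obtain ⟨a, ha⟩ := hA
  obtain ⟨b, hb⟩ := hB
  by_cases h1 : trF v a ≠ 0
  · exact ⟨a, ha, h1⟩
  by_cases h2 : trF u b ≠ 0
  · exact ⟨b, h2, hb⟩
  push_neg at h1 h2
  refine ⟨a + b, ?_, ?_⟩
  · rw [trF_add_right, h2, add_zero]; exact ha
  · rw [trF_add_right, h1, zero_add]; exact hb

lemma exists_isometry (u v : Fin n → F4) (hu : u ≠ 0) (hv : v ≠ 0) :
    ∃ g : (Fin n → F4) ≃ₗ[ZMod 2] (Fin n → F4),
      (∀ x y, trF (g x) (g y) = trF x y) ∧ g u = v := by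
  by_cases huv : trF u v ≠ 0
  · refine ⟨T (u + v), fun x y => T_isometry _ x y, ?_⟩
    have h1 : trF u (u + v) ≠ 0 := by
      rw [trF_add_right, trF_self, zero_add]; exact huv
    rw [T_apply_of_ne h1, ← add_assoc, addV_self, zero_add]
  push_neg at huv
  obtain ⟨w, hw1, hw2⟩ := exists_coupling hu hv
  refine ⟨(T (u + w)).trans (T (w + v)), fun x y => by
    rw [LinearEquiv.trans_apply, LinearEquiv.trans_apply, T_isometry, T_isometry], ?_⟩
  have h1 : trF u (u + w) ≠ 0 := by
    rw [trF_add_right, trF_self, zero_add]; exact hw1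
  have step1 : T (u + w) u = w := by
    rw [T_apply_of_ne h1, ← add_assoc, addV_self, zero_add]
  have h2 : trF w (w + v) ≠ 0 := by
    rw [trF_add_right, trF_self, zero_add, trF_comm]; exact hw2
  have step2 : T (w + v) w = v := by
    rw [T_apply_of_ne h2, ← add_assoc, addV_self, zero_add]
  rw [LinearEquiv.trans_apply, step1, step2]


noncomputable instance : Fintype (Submodule (ZMod 2) (Fin n → F4)) := by
  have : Finite (Submodule (ZMod 2) (Fin n → F4)) :=
    Finite.of_injective (fun C => (C : Set (Fin n → F4))) SetLike.coe_injective
  exact Fintype.ofFinite _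

/-- the collection of self-orthogonal codes of fixed finrank m -/
noncomputable def Phi (n m : ℕ) : Finset (Submodule (ZMod 2) (Fin n → F4)) :=
  Finset.univ.filter (fun C => SelfOrth C ∧ finrank (ZMod 2) C = m)

lemma wt_eq_card_filter (v : Fin n → F4) :
    wt v = (Finset.univ.filter (fun i => v i ≠ 0)).card := by
  rw [wt, Nat.card_eq_fintype_card, Fintype.card_subtype]

lemma wt_eq_zero_iff (v : Fin n → F4) : wt v = 0 ↔ v = 0 := by
  rw [wt_eq_card_filter, Finset.card_eq_zero, Finset.filter_eq_empty_iff]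
  constructor
  · intro h; funext i; have := h (Finset.mem_univ i); simpa using this
  · intro h i _; simp [h]

/-- cardinality of a submodule -/
lemma card_submodule (W : Submodule (ZMod 2) (Fin n → F4)) :
    (Finset.univ.filter (fun w => w ∈ W)).card = 2 ^ (finrank (ZMod 2) W) := by
  rw [← Fintype.card_subtype]
  have : Fintype.card {x // x ∈ W} = Fintype.card (ZMod 2) ^ finrank (ZMod 2) W :=
    card_eq_pow_finrank (K := ZMod 2)
  rwa [ZMod.card] at this

/-- number of nonzero vectors in perp C -/
lemma card_perp_nonzero {m : ℕ} (C : Submodule (ZMod 2) (Fin n → F4))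
    (hC : finrank (ZMod 2) C = m) (hm : m ≤ 2 * n) :
    (Finset.univ.filter (fun w => w ≠ 0 ∧ w ∈ perp C)).card = 2 ^ (2 * n - m) - 1 := by
  have h1 : (Finset.univ.filter (fun w => w ≠ 0 ∧ w ∈ perp C)) =
      (Finset.univ.filter (fun w => w ∈ perp C)).erase 0 := by
    ext w
    simp only [Finset.mem_erase, Finset.mem_filter, Finset.mem_univ, true_and]
  have h2 : finrank (ZMod 2) (perp C) = 2 * n - m := by
    have := finrank_perp C; omega
  rw [h1, Finset.card_erase_of_mem (by simp [Submodule.zero_mem]), card_submodule, h2]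

/-- the double counting identity -/
lemma double_count {m : ℕ} (W : Finset (Fin n → F4)) :
    ∑ w ∈ W, ((Phi n m).filter (fun C => w ∈ perp C)).card
      = ∑ C ∈ Phi n m, (W.filter (fun w => w ∈ perp C)).card := by
  simp only [Finset.card_filter]
  exact Finset.sum_comm

/-- the number of codes whose perp contains a given nonzero vector doesn't depend
on the vector -/
lemma N_const {m : ℕ} (u v : Fin n → F4) (hu : u ≠ 0) (hv : v ≠ 0) :
    ((Phi n m).filter (fun C => u ∈ perp C)).card
      = ((Phi n m).filter (fun C => v ∈ perp C)).card := by
  obtain ⟨g, hgiso, hgu⟩ := exists_isometry u v hu hv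
  refine Finset.card_bij (fun C _ => Submodule.map (g : (Fin n → F4) →ₗ[ZMod 2] (Fin n → F4)) C)
    ?_ ?_ ?_
  · -- maps into target
    intro C hC
    simp only [Finset.mem_filter, Phi, Finset.mem_univ, true_and] at hC ⊢
    obtain ⟨⟨hso, hfr⟩, hup⟩ := hC
    refine ⟨⟨?_, ?_⟩, ?_⟩
    · rintro x hx y hy
      obtain ⟨x', hx', rfl⟩ := Submodule.mem_map.mp hx
      obtain ⟨y', hy', rfl⟩ := Submodule.mem_map.mp hy
      exact (hgiso x' y').trans (hso x' hx' y' hy')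
    · rw [LinearEquiv.finrank_map_eq]; exact hfr
    · rw [mem_perp]
      rintro w hw
      obtain ⟨w', hw', rfl⟩ := Submodule.mem_map.mp hw
      rw [← hgu]
      exact (hgiso u w').trans ((mem_perp u).1 hup w' hw')
  · -- injective
    intro C1 h1 C2 h2 heq
    exact Submodule.map_injective_of_injective g.injective heq
  · -- surjective
    intro C' hC'
    simp only [Finset.mem_filter, Phi, Finset.mem_univ, true_and] at hC'
    obtain ⟨⟨hso, hfr⟩, hvp⟩ := hC'
    refine ⟨Submodule.map (g.symm : (Fin n → F4) →ₗ[ZMod 2] (Fin n → F4)) C', ?_, ?_⟩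
    · simp only [Finset.mem_filter, Phi, Finset.mem_univ, true_and]
      have hsymiso : ∀ x y, trF (g.symm x) (g.symm y) = trF x y := by
        intro x y
        rw [← hgiso (g.symm x) (g.symm y), g.apply_symm_apply, g.apply_symm_apply]
      refine ⟨⟨?_, ?_⟩, ?_⟩
      · rintro x hx y hy
        obtain ⟨x', hx', rfl⟩ := Submodule.mem_map.mp hx
        obtain ⟨y', hy', rfl⟩ := Submodule.mem_map.mp hy
        exact (hsymiso x' y').trans (hso x' hx' y' hy')
      · rw [LinearEquiv.finrank_map_eq]; exact hfr
      · rw [mem_perp]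
        rintro w hw
        obtain ⟨w', hw', rfl⟩ := Submodule.mem_map.mp hw
        have : u = g.symm v := by rw [← hgu, g.symm_apply_apply]
        rw [this]
        exact (hsymiso v w').trans ((mem_perp v).1 hvp w' hw')
    · show Submodule.map (g : (Fin n → F4) →ₗ[ZMod 2] (Fin n → F4))
          (Submodule.map (g.symm : (Fin n → F4) →ₗ[ZMod 2] (Fin n → F4)) C') = C'
      rw [← Submodule.map_comp]
      convert Submodule.map_id C'
      ext x
      simp


lemma smul_one_inj (c : ZMod 2) (h : c • (1:F4) = 0) : c = 0 := by
  rcases zmod2_cases c with h1 | h1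
  · exact h1
  · exfalso; rw [h1, one_smul] at h; exact one_ne_zero h

/-- orthogonality passes to spans -/
lemma selfOrth_span (S : Set (Fin n → F4)) (h : ∀ a ∈ S, ∀ b ∈ S, trF a b = 0) :
    SelfOrth (Submodule.span (ZMod 2) S) := by
  intro u hu v hv
  have key : ∀ a ∈ S, trF a v = 0 := by
    intro a ha
    refine Submodule.span_induction ?_ ?_ ?_ ?_ hv
    · intro b hb; exact h a ha b hb
    · exact trF_zero_right a
    · intro x y _ _ hx hy; rw [trF_add_right, hx, hy, add_zero]
    · intro c x _ hx; rw [trF_smul_right, hx, smul_zero]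
  refine Submodule.span_induction (p := fun x _ => trF x v = 0) ?_ ?_ ?_ ?_ hu
  · intro b hb; exact key b hb
  · exact trF_zero_left v
  · intro x y _ _ hx hy
    rw [trF_add_left, hx, hy, add_zero]
  · intro c x _ hx
    rw [trF_smul_left, hx, smul_zero]

lemma single_orth (i j : Fin n) :
    trF (Pi.single i (1:F4)) (Pi.single j (1:F4)) = 0 := by
  unfold trF
  refine Finset.sum_eq_zero fun l _ => ?_
  rcases em (l = i) with rfl | hl
  · rcases em (l = j) with rfl | hj
    · simp only [Pi.single_eq_same]
      linear_combination F4two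
    · simp [Pi.single_eq_of_ne hj]
  · simp [Pi.single_eq_of_ne hl]

/-- there exists a self-orthogonal code of finrank m whenever m ≤ n -/
lemma exists_selfOrth (m : ℕ) (hm : m ≤ n) :
    ∃ C : Submodule (ZMod 2) (Fin n → F4), SelfOrth C ∧ finrank (ZMod 2) C = m := by
  classical
  set f : Fin m → (Fin n → F4) := fun j => Pi.single (Fin.castLE hm j) (1:F4) with hf
  have hli : LinearIndependent (ZMod 2) f := by
    rw [Fintype.linearIndependent_iff]
    intro g hg j
    have := congrFun hg (Fin.castLE hm j)
    rw [Finset.sum_apply] at this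
    rw [Finset.sum_eq_single j] at this
    · simp only [hf, Pi.smul_apply, Pi.single_eq_same, Pi.zero_apply] at this
      exact smul_one_inj _ this
    · intro b _ hb
      have : (Fin.castLE hm b) ≠ (Fin.castLE hm j) := by
        simp [Fin.castLE, Fin.ext_iff] at hb ⊢
        omega
      simp only [hf, Pi.smul_apply, Pi.single_eq_of_ne this.symm, smul_zero]
    · simp
  refine ⟨Submodule.span (ZMod 2) (Set.range f), ?_, ?_⟩
  · refine selfOrth_span _ ?_
    rintro a ⟨i, rfl⟩ b ⟨j, rfl⟩
    exact single_orth _ _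
  · rw [finrank_span_eq_card hli, Fintype.card_fin]


lemma card_F4_ne : Fintype.card {x : F4 // x ≠ 0} = 3 := by
  have := Fintype.card_subtype_compl (fun x : F4 => x = 0)
  rw [F4card, Fintype.card_subtype_eq (0:F4)] at this
  simpa using this

lemma card_supp_eq (s : Finset (Fin n)) :
    (Finset.univ.filter (fun v : Fin n → F4 =>
        Finset.univ.filter (fun i => v i ≠ 0) = s)).card ≤ 3 ^ s.card := by
  rw [← Fintype.card_subtype]
  have h3 : 3 ^ s.card = Fintype.card (↥s → {x : F4 // x ≠ 0}) := by
    rw [Fintype.card_fun, card_F4_ne, Fintype.card_coe]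
  rw [h3]
  apply Fintype.card_le_of_injective
    (fun vp => fun j => (⟨vp.1 j.1, by
      have h2 : (j : Fin n) ∈ Finset.univ.filter (fun i => vp.1 i ≠ 0) := by
        rw [vp.2]; exact j.2
      simpa using h2⟩ : {x : F4 // x ≠ 0}))
  intro v v' heq
  ext1
  funext j
  by_cases hj : j ∈ s
  · have := congrFun heq ⟨j, hj⟩
    simpa using this
  · have hv : v.1 j = 0 := by
      by_contra h
      apply hj
      have := v.2
      rw [← this]
      simp only [Finset.mem_filter, Finset.mem_univ, true_and]
      exact h
    have hv' : v'.1 j = 0 := by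
      by_contra h
      apply hj
      have := v'.2
      rw [← this]
      simp only [Finset.mem_filter, Finset.mem_univ, true_and]
      exact h
    rw [hv, hv']

lemma card_wt_le (i : ℕ) :
    (Finset.univ.filter (fun v : Fin n → F4 => wt v = i)).card ≤ 3 ^ i * n.choose i := by
  have hsub : (Finset.univ.filter (fun v : Fin n → F4 => wt v = i)) ⊆
      (Finset.univ.powersetCard i).biUnion (fun s =>
        Finset.univ.filter (fun v : Fin n → F4 =>
          Finset.univ.filter (fun l => v l ≠ 0) = s)) := by
    intro v hv
    simp only [Finset.mem_filter, Finset.mem_univ, true_and] at hv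
    rw [Finset.mem_biUnion]
    refine ⟨Finset.univ.filter (fun l => v l ≠ 0), ?_, ?_⟩
    · rw [Finset.mem_powersetCard]
      exact ⟨Finset.filter_subset _ _ |>.trans (by simp), by rw [← wt_eq_card_filter]; exact hv⟩
    · simp
  calc (Finset.univ.filter (fun v : Fin n → F4 => wt v = i)).card
      ≤ _ := Finset.card_le_card hsub
    _ ≤ ∑ s ∈ Finset.univ.powersetCard i, (Finset.univ.filter (fun v : Fin n → F4 =>
          Finset.univ.filter (fun l => v l ≠ 0) = s)).card := Finset.card_biUnion_le
    _ ≤ ∑ s ∈ Finset.univ.powersetCard i, 3 ^ i := by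
        refine Finset.sum_le_sum fun s hs => ?_
        rw [Finset.mem_powersetCard] at hs
        have := card_supp_eq (n := n) s
        rwa [hs.2] at this
    _ = 3 ^ i * n.choose i := by
        rw [Finset.sum_const, Finset.card_powersetCard, Finset.card_univ, Fintype.card_fin,
          smul_eq_mul, mul_comm]

lemma card_bad_le (d : ℕ) :
    (Finset.univ.filter (fun v : Fin n → F4 => v ≠ 0 ∧ wt v ≤ d - 1)).card
      ≤ ∑ i ∈ Finset.Icc 1 (d - 1), 3 ^ i * n.choose i := by
  have hsub : (Finset.univ.filter (fun v : Fin n → F4 => v ≠ 0 ∧ wt v ≤ d - 1)) ⊆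
      (Finset.Icc 1 (d-1)).biUnion (fun i =>
        Finset.univ.filter (fun v : Fin n → F4 => wt v = i)) := by
    intro v hv
    simp only [Finset.mem_filter, Finset.mem_univ, true_and] at hv
    rw [Finset.mem_biUnion]
    refine ⟨wt v, ?_, by simp⟩
    rw [Finset.mem_Icc]
    have : wt v ≠ 0 := fun h => hv.1 ((wt_eq_zero_iff v).1 h)
    omega
  calc _ ≤ _ := Finset.card_le_card hsub
    _ ≤ ∑ i ∈ Finset.Icc 1 (d-1), (Finset.univ.filter (fun v : Fin n → F4 => wt v = i)).card :=
        Finset.card_biUnion_le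
    _ ≤ _ := Finset.sum_le_sum fun i _ => card_wt_le i

end Aux

/-- the quantitative quantum Gilbert–Varshamov bound.
If Σ_{i=1}^{d-1} 3^i C(n,i) < (2^{2n}-1)/(2^{n+k}-1) (stated fraction-free)
then there exists a self-orthogonal additive code C over F_4 of length n and
F_2-dimension n-k all of whose vectors in C^⊥ \ C have weight ≥ d. -/
theorem quantum_GV (n k d : ℕ) (hk1 : 1 ≤ k) (hkn : k ≤ n - 1) (hd : 1 ≤ d)
    (hGV : (∑ i ∈ Finset.Icc 1 (d - 1), 3 ^ i * n.choose i) * (2 ^ (n + k) - 1)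
            < 2 ^ (2 * n) - 1) :
    ∃ C : Submodule (ZMod 2) (Fin n → F4),
      SelfOrth C ∧ Module.finrank (ZMod 2) C = n - k ∧
      ∀ u : Fin n → F4, (∀ w ∈ C, trF u w = 0) → u ∉ C → d ≤ wt u := by
  classical
  have hn : 2 ≤ n := by
    rcases Nat.eq_zero_or_pos n with rfl | h
    · omega
    · omega
  set m := n - k with hm
  have hmn : m ≤ n := Nat.sub_le n k
  have hm2n : m ≤ 2 * n := hmn.trans (by omega)
  have hnk : 2 * n - m = n + k := by omega
  set B := ∑ i ∈ Finset.Icc 1 (d - 1), 3 ^ i * n.choose i with hB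
  set P := Phi n m with hP
  -- P is nonempty
  obtain ⟨C₀, hC₀so, hC₀fr⟩ := exists_selfOrth m hmn
  have hC₀P : C₀ ∈ P := by
    rw [hP, Phi, Finset.mem_filter]
    exact ⟨Finset.mem_univ _, hC₀so, hC₀fr⟩
  have hPpos : 0 < P.card := Finset.card_pos.2 ⟨C₀, hC₀P⟩
  -- reference nonzero vector
  have hn0 : 0 < n := by omega
  set w₀ : Fin n → F4 := Pi.single ⟨0, hn0⟩ 1 with hw₀def
  have hw₀ : w₀ ≠ 0 := by
    intro h
    have := congrFun h ⟨0, hn0⟩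
    rw [hw₀def] at this
    simp at this
  set N := (P.filter (fun C => w₀ ∈ perp C)).card with hNdef
  -- all nonzero vectors
  set W := Finset.univ.filter (fun v : Fin n → F4 => v ≠ 0) with hW
  have hWcard : W.card = 2 ^ (2 * n) - 1 := by
    have : W = Finset.univ.erase 0 := by
      ext v; simp [hW, Finset.mem_erase]
    rw [this, Finset.card_erase_of_mem (Finset.mem_univ _), Finset.card_univ, cardV]
  -- key identity
  have hkey : W.card * N = P.card * (2 ^ (n + k) - 1) := by
    have h1 : ∑ w ∈ W, ((Phi n m).filter (fun C => w ∈ perp C)).card = W.card * N := by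
      rw [Finset.sum_congr rfl (fun w hw => ?_), Finset.sum_const, smul_eq_mul]
      have hwne : w ≠ 0 := by
        rw [hW] at hw; simp at hw; exact hw
      exact N_const w w₀ hwne hw₀
    have h2 : ∑ C ∈ Phi n m, (W.filter (fun w => w ∈ perp C)).card
        = P.card * (2 ^ (n + k) - 1) := by
      rw [Finset.sum_congr rfl (fun C hC => ?_), Finset.sum_const, smul_eq_mul]
      have hfr : finrank (ZMod 2) C = m := by
        rw [Phi, Finset.mem_filter] at hC; exact hC.2.2
      have : W.filter (fun w => w ∈ perp C)
          = Finset.univ.filter (fun w => w ≠ 0 ∧ w ∈ perp C) := by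
        rw [hW, Finset.filter_filter]
      rw [this, card_perp_nonzero C hfr hm2n, hnk]
    rw [← h1, ← h2]
    exact double_count W
  -- bad codes
  set Bd := Finset.univ.filter (fun v : Fin n → F4 => v ≠ 0 ∧ wt v ≤ d - 1) with hBd
  set PB := P.filter (fun C => ∃ v, v ≠ 0 ∧ wt v ≤ d - 1 ∧ v ∈ perp C) with hPB
  have hPBle : PB.card ≤ Bd.card * N := by
    have hsub : PB ⊆ Bd.biUnion (fun v => P.filter (fun C => v ∈ perp C)) := by
      intro C hC
      rw [hPB, Finset.mem_filter] at hC
      obtain ⟨hCP, v, hv1, hv2, hv3⟩ := hC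
      rw [Finset.mem_biUnion]
      exact ⟨v, by rw [hBd]; simp [hv1, hv2], by rw [Finset.mem_filter]; exact ⟨hCP, hv3⟩⟩
    calc PB.card ≤ _ := Finset.card_le_card hsub
      _ ≤ ∑ v ∈ Bd, (P.filter (fun C => v ∈ perp C)).card := Finset.card_biUnion_le
      _ = ∑ v ∈ Bd, N := by
          refine Finset.sum_congr rfl fun v hv => ?_
          have hvne : v ≠ 0 := by rw [hBd] at hv; simp at hv; exact hv.1
          exact N_const v w₀ hvne hw₀
      _ = Bd.card * N := by rw [Finset.sum_const, smul_eq_mul]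
  have hBdB : Bd.card ≤ B := card_bad_le d
  -- strict inequality PB.card < P.card
  have hstrict : PB.card < P.card := by
    have h2n1 : 0 < 2 ^ (2 * n) - 1 := by
      have : (2:ℕ) ^ 1 ≤ 2 ^ (2*n) := Nat.pow_le_pow_right (by norm_num) (by omega)
      omega
    have hmul : (B * N) * (2 ^ (2 * n) - 1) < P.card * (2 ^ (2 * n) - 1) := by
      calc (B * N) * (2 ^ (2 * n) - 1) = B * (W.card * N) := by rw [hWcard]; ring
        _ = B * (P.card * (2 ^ (n + k) - 1)) := by rw [hkey]
        _ = P.card * (B * (2 ^ (n + k) - 1)) := by ring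
        _ < P.card * (2 ^ (2 * n) - 1) := by
            exact Nat.mul_lt_mul_of_le_of_lt (le_refl P.card) hGV hPpos
    have : B * N < P.card := lt_of_mul_lt_mul_right hmul (Nat.zero_le _)
    calc PB.card ≤ Bd.card * N := hPBle
      _ ≤ B * N := Nat.mul_le_mul_right N hBdB
      _ < P.card := this
  -- pick a good code
  have : ∃ C ∈ P, C ∉ PB := by
    by_contra h
    push_neg at h
    have : P ⊆ PB := fun C hC => h C hC
    have := Finset.card_le_card this
    omega
  obtain ⟨C, hCP, hCnB⟩ := this
  rw [hP, Phi, Finset.mem_filter] at hCP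
  refine ⟨C, hCP.2.1, hCP.2.2, ?_⟩
  intro u hu huC
  by_contra hlt
  push_neg at hlt
  apply hCnB
  rw [hPB, Finset.mem_filter]
  have hune : u ≠ 0 := by
    intro h; exact huC (h ▸ C.zero_mem)
  refine ⟨by rw [hP, Phi, Finset.mem_filter]; exact ⟨Finset.mem_univ _, hCP.2⟩,
    u, hune, by omega, (mem_perp u).2 hu⟩
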